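/- arXiv:1709.08841 — 4 statements merged into one kernel-verified Lean document; each statement's English description precedes it below -/
import Mathlib

section
/- For all real x₁, x₂: x₁² + x₂² + 2x₁x₂ − 4x₁ − 4x₂ − (2 − 4√2) = (√2 − 1)(x₁ − x₂)² + √2(−√2 + x₁ + x₂)² + 2(√2 − 1)(1 − x₁² − x₂²), and consequently the minimum of x₁² + x₂² + 2x₁x₂ − 4x₁ − 4x₂ subject to x₁² + x₂² = 1 equals 2 − 4√2. -/
open Real

/-- Sum-of-squares certificate and the minimum of
`x₁² + x₂² + 2x₁x₂ − 4x₁ − 4x₂` on the unit circle. -/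
theorem sos_certificate_circle_min :
    (∀ x₁ x₂ : ℝ,
      x₁^2 + x₂^2 + 2*x₁*x₂ - 4*x₁ - 4*x₂ - (2 - 4*Real.sqrt 2) =
        (Real.sqrt 2 - 1)*(x₁ - x₂)^2 + Real.sqrt 2 * (-Real.sqrt 2 + x₁ + x₂)^2
          + 2*(Real.sqrt 2 - 1)*(1 - x₁^2 - x₂^2)) ∧
    IsLeast {v : ℝ | ∃ x₁ x₂ : ℝ, x₁^2 + x₂^2 = 1 ∧
      v = x₁^2 + x₂^2 + 2*x₁*x₂ - 4*x₁ - 4*x₂} (2 - 4*Real.sqrt 2) := by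
  have h2 : Real.sqrt 2 ^ 2 = 2 := Real.sq_sqrt (by norm_num)
  have h2' : (1:ℝ) ≤ Real.sqrt 2 := by
    nlinarith [Real.sqrt_nonneg 2]
  have hid : ∀ x₁ x₂ : ℝ,
      x₁^2 + x₂^2 + 2*x₁*x₂ - 4*x₁ - 4*x₂ - (2 - 4*Real.sqrt 2) =
        (Real.sqrt 2 - 1)*(x₁ - x₂)^2 + Real.sqrt 2 * (-Real.sqrt 2 + x₁ + x₂)^2
          + 2*(Real.sqrt 2 - 1)*(1 - x₁^2 - x₂^2) := by
    intro x₁ x₂; nlinarith [h2]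
  refine ⟨hid, ⟨⟨Real.sqrt 2/2, Real.sqrt 2/2, by nlinarith, by nlinarith⟩, ?_⟩⟩
  rintro v ⟨x₁, x₂, hc, rfl⟩
  have := hid x₁ x₂
  nlinarith [sq_nonneg (x₁ - x₂), sq_nonneg (-Real.sqrt 2 + x₁ + x₂), Real.sqrt_nonneg 2]
end

section
/- The optimal value of the LP: minimize y₂ − y₁ subject to y₁ ≥ 0, 1 − y₁ ≥ 0, y₂ ≥ 0, y₁ − y₂ ≥ 0, 1 − 2y₁ + y₂ ≥ 0, y₃ ≥ 0, y₂ − y₃ ≥ 0, y₁ − 2y₂ + y₃ ≥ 0, 1 − 3y₁ + 3y₂ − y₃ ≥ 0, is −1/3, attained at (y₁, y₂, y₃) = (1/3, 0, 0). -/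
/-- The third-order LP relaxation of `min x(x−1)` over `[0,1]` has optimal
value `−1/3`, attained at `(y₁, y₂, y₃) = (1/3, 0, 0)`. -/
theorem third_order_lp_relaxation_value :
    IsLeast {v : ℝ | ∃ y₁ y₂ y₃ : ℝ,
        0 ≤ y₁ ∧ 0 ≤ 1 - y₁ ∧ 0 ≤ y₂ ∧ 0 ≤ y₁ - y₂ ∧ 0 ≤ 1 - 2*y₁ + y₂ ∧
        0 ≤ y₃ ∧ 0 ≤ y₂ - y₃ ∧ 0 ≤ y₁ - 2*y₂ + y₃ ∧ 0 ≤ 1 - 3*y₁ + 3*y₂ - y₃ ∧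
        v = y₂ - y₁} (-(1/3)) ∧
    (0 ≤ (1/3 : ℝ) ∧ 0 ≤ 1 - (1/3 : ℝ) ∧ 0 ≤ (0 : ℝ) ∧ 0 ≤ (1/3 : ℝ) - 0 ∧
      0 ≤ 1 - 2*(1/3 : ℝ) + 0 ∧ 0 ≤ (0 : ℝ) ∧ 0 ≤ (0 : ℝ) - 0 ∧
      0 ≤ (1/3 : ℝ) - 2*0 + 0 ∧ 0 ≤ 1 - 3*(1/3 : ℝ) + 3*0 - 0 ∧
      (0 : ℝ) - 1/3 = -(1/3)) := by
  refine ⟨⟨⟨1/3, 0, 0, by norm_num⟩, ?_⟩, by norm_num⟩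
  rintro v ⟨y₁, y₂, y₃, h1, h2, h3, h4, h5, h6, h7, h8, h9, rfl⟩
  linarith
end

section
/- The minimum of x(x−1) over x ∈ [0,1] equals −1/4, and for every integer r ≥ 2 the r-th order LP relaxation value (obtained by replacing xᵏ with variables yₖ and imposing nonnegativity of all products x^i(1−x)^j with i+j ≤ r expanded linearly in y) is strictly less than −1/4. -/
open Finset


lemma binom_half (i j : ℕ) :
    ∑ k ∈ range (j + 1), (-1 : ℝ) ^ k * (j.choose k) * (1/2 : ℝ) ^ (i + k)
      = (1/2 : ℝ) ^ (i + j) := by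
  have h := add_pow (-(1/2) : ℝ) 1 j
  have h2 : ((1:ℝ)/2) ^ j = ∑ k ∈ range (j + 1), (-1:ℝ)^k * (j.choose k) * (1/2)^k := by
    have : (-(1/2 : ℝ) + 1) = 1/2 := by norm_num
    rw [this] at h
    rw [h]
    apply Finset.sum_congr rfl
    intro k _
    rw [neg_pow]
    ring
  rw [pow_add, h2, Finset.mul_sum]
  apply Finset.sum_congr rfl
  intro k _
  rw [pow_add]
  ring

lemma ind_sum (i j : ℕ) (ε : ℝ) (hε : 0 ≤ ε) :
    -(j:ℝ) * ε ≤ ∑ k ∈ range (j+1), (-1:ℝ)^k * (j.choose k) * (if i + k = 1 then ε else 0) := by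
  match i with
  | 0 =>
    have h : ∑ k ∈ range (j+1), (-1:ℝ)^k * (j.choose k) * (if 0 + k = 1 then ε else 0)
        = ∑ k ∈ range (j+1), (if k = 1 then (-1:ℝ)^k * (j.choose k) * ε else 0) := by
      apply sum_congr rfl; intro k _
      simp only [zero_add]
      split <;> simp [*]
    rw [h, Finset.sum_ite_eq' (range (j+1)) 1 (fun k => (-1:ℝ)^k * (j.choose k) * ε)]
    split
    · simp [Nat.choose_one_right, neg_mul]
    · simp only [Finset.mem_range, not_lt] at *
      have : j = 0 := by omega
      simp [this]
  | 1 =>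
    have h : ∑ k ∈ range (j+1), (-1:ℝ)^k * (j.choose k) * (if 1 + k = 1 then ε else 0)
        = ∑ k ∈ range (j+1), (if k = 0 then (-1:ℝ)^k * (j.choose k) * ε else 0) := by
      apply sum_congr rfl; intro k _
      split <;> split <;> simp_all
    rw [h, Finset.sum_ite_eq' (range (j+1)) 0 (fun k => (-1:ℝ)^k * (j.choose k) * ε)]
    simp
    nlinarith [Nat.cast_nonneg (α := ℝ) j]
  | (n+2) =>
    have h : ∑ k ∈ range (j+1), (-1:ℝ)^k * (j.choose k) * (if n + 2 + k = 1 then ε else 0) = 0 := by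
      apply Finset.sum_eq_zero; intro k _
      have : ¬ (n + 2 + k = 1) := by omega
      simp [this]
    rw [h]
    nlinarith [Nat.cast_nonneg (α := ℝ) j]

/-- Feasibility for the `r`-th order Krivine/Sherali–Adams LP relaxation of
`min x(x−1)` over `0 ≤ x ≤ 1`: `y k` stands for `x^k`, and the linearization of
every product `x^i (1−x)^j` with `i + j ≤ r` is required to be nonnegative. -/
def lpRelaxFeasible (r : ℕ) (y : ℕ → ℝ) : Prop :=
  y 0 = 1 ∧ ∀ i j : ℕ, i + j ≤ r →
    0 ≤ ∑ k ∈ Finset.range (j + 1), (-1 : ℝ) ^ k * (j.choose k) * y (i + k)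

/-- The minimum of `x(x−1)` over `[0,1]` equals `−1/4`, and for every `r ≥ 2`
the `r`-th order LP relaxation value is strictly less than `−1/4`. -/
theorem lp_hierarchy_not_finitely_convergent :
    IsLeast {v : ℝ | ∃ x : ℝ, 0 ≤ x ∧ x ≤ 1 ∧ v = x * (x - 1)} (-(1/4)) ∧
    ∀ r : ℕ, 2 ≤ r →
      sInf {v : ℝ | ∃ y : ℕ → ℝ, lpRelaxFeasible r y ∧ v = y 2 - y 1} < -(1/4) := by
  constructor
  · constructor
    · exact ⟨1/2, by norm_num⟩
    · rintro v ⟨x, hx0, hx1, rfl⟩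
      nlinarith [sq_nonneg (x - 1/2)]
  · intro r hr
    set S := {v : ℝ | ∃ y : ℕ → ℝ, lpRelaxFeasible r y ∧ v = y 2 - y 1} with hS
    set ε : ℝ := (1/2)^r / (r+1) with hεdef
    have hrpos : (0:ℝ) < (r:ℝ) + 1 := by positivity
    have hε : 0 < ε := by positivity
    -- the feasible point
    set y : ℕ → ℝ := fun k => (1/2)^k + (if k = 1 then ε else 0) with hy
    have hfeas : lpRelaxFeasible r y := by
      constructor
      · simp [hy]
      · intro i j hij
        have hsplit : ∑ k ∈ range (j+1), (-1:ℝ)^k * (j.choose k) * y (i+k)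
            = (∑ k ∈ range (j+1), (-1:ℝ)^k * (j.choose k) * (1/2:ℝ)^(i+k))
              + ∑ k ∈ range (j+1), (-1:ℝ)^k * (j.choose k) * (if i + k = 1 then ε else 0) := by
          rw [← Finset.sum_add_distrib]
          apply sum_congr rfl
          intro k _
          simp only [hy]
          ring
        rw [hsplit, binom_half i j]
        have h1 : -(j:ℝ) * ε ≤ ∑ k ∈ range (j+1), (-1:ℝ)^k * (j.choose k) * (if i + k = 1 then ε else 0) :=
          ind_sum i j ε hε.le
        have hjr : (j:ℝ) ≤ r := by exact_mod_cast Nat.le_trans (Nat.le_add_left j i) hij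
        have hpow : (1/2:ℝ)^r ≤ (1/2:ℝ)^(i+j) := by
          apply pow_le_pow_of_le_one (by norm_num) (by norm_num) hij
        have hje : (j:ℝ) * ε ≤ (r:ℝ) * ε := by nlinarith
        have hre : (r:ℝ) * ε < (1/2:ℝ)^r := by
          rw [hεdef, div_eq_mul_inv, ← mul_assoc, mul_comm (r:ℝ) ((1/2:ℝ)^r), mul_assoc]
          have hlt : (r:ℝ) * ((r:ℝ)+1)⁻¹ < 1 := by
            rw [← div_eq_mul_inv, div_lt_one hrpos]; linarith
          nlinarith [pow_pos (by norm_num : (0:ℝ) < 1/2) r]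
        linarith
    have hval : y 2 - y 1 = -(1/4) - ε := by
      simp [hy]; ring
    have hmem : -(1/4) - ε ∈ S := ⟨y, hfeas, hval.symm⟩
    have hbdd : BddBelow S := by
      refine ⟨-1, ?_⟩
      rintro v ⟨z, ⟨hz0, hz⟩, rfl⟩
      have h20 := hz 2 0 (by omega)
      have h01 := hz 0 1 (by omega)
      simp [Finset.sum_range_succ] at h20 h01
      rw [hz0] at h01
      linarith
    have := csInf_le hbdd hmem
    linarith
end

section
/- Let W = W₀ + UUᵀ with W₀ symmetric positive definite and U of rank at most θ, and let H = Aᵀ(W ⊗ W)A for a full-column-rank A. Then H decomposes as H = Aᵀ(W₀ ⊗ W₀)A + UUᵀ-type low-rank term: specifically H = Aᵀ(W₀⊗W₀)A + Aᵀ(U⊗Z)(U⊗Z)ᵀA where Z satisfies ZZᵀ = 2W₀ + UUᵀ, and the matrix Aᵀ(U⊗Z)(U⊗Z)ᵀA has rank at most nθ. -/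
open Matrix Kronecker

lemma swap_kron {n m : ℕ} (B C : Matrix (Fin n) (Fin n) ℝ)
    (hB : B.IsSymm) (hC : C.IsSymm)
    (As : Fin m → Matrix (Fin n) (Fin n) ℝ) (hsym : ∀ k, (As k).IsSymm)
    (A : Matrix (Fin n × Fin n) (Fin m) ℝ)
    (hA : A = Matrix.of fun p k => As k p.1 p.2) :
    Aᵀ * ((B ⊗ₖ C) * A) = Aᵀ * ((C ⊗ₖ B) * A) := by
  subst hA
  ext j k
  simp only [Matrix.mul_apply, Matrix.transpose_apply, Matrix.kroneckerMap_apply,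
    Matrix.of_apply]
  refine Fintype.sum_equiv (Equiv.prodComm _ _) _ _ (fun p => ?_)
  simp only [Equiv.prodComm_apply, Prod.fst_swap, Prod.snd_swap]
  rw [(hsym j).apply p.2 p.1]
  congr 1
  refine Fintype.sum_equiv (Equiv.prodComm _ _) _ _ (fun q => ?_)
  simp only [Equiv.prodComm_apply, Prod.fst_swap, Prod.snd_swap]
  rw [(hsym k).apply q.2 q.1]
  ring

/-- Decomposition of the interior-point Hessian matrix `H = 𝐀ᵀ(W ⊗ W)𝐀` for a
scaling matrix `W = W₀ + UUᵀ`: with `Z Zᵀ = 2W₀ + UUᵀ` one has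
`H = 𝐀ᵀ(W₀ ⊗ W₀)𝐀 + 𝐀ᵀ(U ⊗ Z)(U ⊗ Z)ᵀ𝐀`, and the low-rank term has rank at
most `nθ` (indeed `rank (U ⊗ Z) ≤ nθ`). -/
theorem hessian_low_rank_decomposition {n θ m : ℕ}
    (W₀ : Matrix (Fin n) (Fin n) ℝ) (hW₀ : W₀.PosDef)
    (U : Matrix (Fin n) (Fin θ) ℝ) (Z : Matrix (Fin n) (Fin n) ℝ)
    (hZ : Z * Zᵀ = (2 : ℝ) • W₀ + U * Uᵀ)
    (As : Fin m → Matrix (Fin n) (Fin n) ℝ) (hsym : ∀ k, (As k).IsSymm)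
    (A : Matrix (Fin n × Fin n) (Fin m) ℝ)
    (hA : A = Matrix.of fun p k => As k p.1 p.2)
    (hrank : Function.Injective fun y : Fin m → ℝ => A *ᵥ y) :
    Aᵀ * (((W₀ + U * Uᵀ) ⊗ₖ (W₀ + U * Uᵀ)) * A) =
        Aᵀ * ((W₀ ⊗ₖ W₀) * A) + Aᵀ * ((U ⊗ₖ Z) * ((U ⊗ₖ Z)ᵀ * A)) ∧
      (U ⊗ₖ Z).rank ≤ n * θ ∧
      (Aᵀ * ((U ⊗ₖ Z) * ((U ⊗ₖ Z)ᵀ * A))).rank ≤ n * θ := by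
  have hrk : (U ⊗ₖ Z).rank ≤ n * θ := by
    have := (U ⊗ₖ Z).rank_le_card_width
    simpa [Fintype.card_prod, mul_comm] using this
  refine ⟨?_, hrk, ?_⟩
  · have hW₀s : W₀.IsSymm := by have h := hW₀.1; rwa [Matrix.IsHermitian, Matrix.conjTranspose_eq_transpose_of_trivial] at h
    have hSs : (U * Uᵀ).IsSymm := by
      unfold Matrix.IsSymm
      rw [Matrix.transpose_mul, Matrix.transpose_transpose]
    have hkron : (U ⊗ₖ Z) * (U ⊗ₖ Z)ᵀ = (U * Uᵀ) ⊗ₖ (Z * Zᵀ) := by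
      rw [← Matrix.kroneckerMap_transpose, Matrix.mul_kronecker_mul]
    have hswap := swap_kron W₀ (U * Uᵀ) hW₀s hSs As hsym A hA
    rw [← Matrix.mul_assoc (U ⊗ₖ Z) _ A, hkron, hZ]
    have expand : (W₀ + U * Uᵀ) ⊗ₖ (W₀ + U * Uᵀ) =
        W₀ ⊗ₖ W₀ + W₀ ⊗ₖ (U * Uᵀ) + (U * Uᵀ) ⊗ₖ W₀ + (U * Uᵀ) ⊗ₖ (U * Uᵀ) := by
      rw [Matrix.add_kronecker, Matrix.kronecker_add, Matrix.kronecker_add]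
      abel
    have expand2 : (U * Uᵀ) ⊗ₖ ((2 : ℝ) • W₀ + U * Uᵀ) =
        (2 : ℝ) • ((U * Uᵀ) ⊗ₖ W₀) + (U * Uᵀ) ⊗ₖ (U * Uᵀ) := by
      rw [Matrix.kronecker_add, Matrix.kronecker_smul]
    rw [expand, expand2]
    simp only [Matrix.add_mul, Matrix.mul_add, Matrix.smul_mul, Matrix.mul_smul, hswap]
    module
  · calc (Aᵀ * ((U ⊗ₖ Z) * ((U ⊗ₖ Z)ᵀ * A))).rank
        ≤ ((U ⊗ₖ Z) * ((U ⊗ₖ Z)ᵀ * A)).rank := Matrix.rank_mul_le_right _ _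
      _ ≤ (U ⊗ₖ Z).rank := Matrix.rank_mul_le_left _ _
      _ ≤ n * θ := hrk
end
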